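/- arXiv:2508.12122 — 2 statements merged into one kernel-verified Lean document; each statement's English description precedes it below -/
import Mathlib

section
/- Let d ≥ 2, let G be a closed fractal subgroup of Aut T_d, and let H be an open self-similar subgroup of G. Then the normal core N = ⋂_{a ∈ G} aHa⁻¹ of H in G is an open, normal, self-similar subgroup of G. -/
open scoped Pointwise

namespace TreeDyn

/-- Vertices of the `d`-regular rooted tree: finite words over `{0,…,d-1}`,
with the empty word as root and children of `w` the words `w ++ [x]`. -/
abbrev Vertex (d : ℕ) := List (Fin d)

/-- A function on words is length-preserving and prefix-preserving. -/
def LP (d : ℕ) (f : Vertex d → Vertex d) : Prop :=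
  (∀ w : Vertex d, (f w).length = w.length) ∧
    ∀ v w : Vertex d, v <+: w → f v <+: f w

theorem LP.id' (d : ℕ) : LP d id := ⟨fun _ => rfl, fun _ _ h => h⟩

theorem LP.comp {d : ℕ} {f g : Vertex d → Vertex d} (hf : LP d f) (hg : LP d g) :
    LP d (f ∘ g) :=
  ⟨fun w => (hf.1 (g w)).trans (hg.1 w), fun v w h => hf.2 _ _ (hg.2 _ _ h)⟩

/-- The automorphism group of the rooted `d`-regular tree, realized as the subgroup of
permutations of the vertex set which fix the root and preserve the child relation
(equivalently: length- and prefix-preserving permutations). -/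
def treeAut (d : ℕ) : Subgroup (Equiv.Perm (Vertex d)) where
  carrier := {g | LP d ⇑g ∧ LP d ⇑g⁻¹}
  one_mem' := ⟨LP.id' d, by simpa using LP.id' d⟩
  mul_mem' := by
    rintro a b ⟨ha1, ha2⟩ ⟨hb1, hb2⟩
    refine ⟨?_, ?_⟩
    · simpa [Equiv.Perm.coe_mul] using ha1.comp hb1
    · rw [mul_inv_rev]
      simpa [Equiv.Perm.coe_mul] using hb2.comp ha2
  inv_mem' := by
    rintro a ⟨h1, h2⟩
    exact ⟨h2, by simpa using h1⟩

/-- `Aut T_d`, the automorphism group of the `d`-regular rooted tree. -/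
abbrev AutT (d : ℕ) := ↥(treeAut d)

namespace AutT

variable {d : ℕ}

/-- The underlying permutation of the vertices. -/
def toPerm (g : AutT d) : Equiv.Perm (Vertex d) := g.1

theorem toPerm_mul (g h : AutT d) : (g * h).toPerm = g.toPerm * h.toPerm := rfl

theorem toPerm_inv (g : AutT d) : (g⁻¹).toPerm = (g.toPerm)⁻¹ := rfl

theorem toPerm_one : (1 : AutT d).toPerm = 1 := rfl

theorem length_apply (g : AutT d) (w : Vertex d) : (g.toPerm w).length = w.length :=
  g.2.1.1 w

theorem prefix_apply (g : AutT d) {v w : Vertex d} (h : v <+: w) :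
    g.toPerm v <+: g.toPerm w :=
  g.2.1.2 v w h

theorem take_apply (g : AutT d) (v u : Vertex d) :
    (g.toPerm (v ++ u)).take v.length = g.toPerm v := by
  have h : g.toPerm v <+: g.toPerm (v ++ u) := g.prefix_apply (List.prefix_append v u)
  have h2 := List.prefix_iff_eq_take.mp h
  rw [length_apply] at h2
  exact h2.symm

theorem apply_append (g : AutT d) (v u : Vertex d) :
    g.toPerm (v ++ u) = g.toPerm v ++ (g.toPerm (v ++ u)).drop v.length := by
  conv_lhs => rw [← List.take_append_drop v.length (g.toPerm (v ++ u))]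
  rw [take_apply]

/-- The section function: the action of `g` on the subtree over `v`, transported
to the whole tree. -/
def secFun (g : AutT d) (v : Vertex d) : Vertex d → Vertex d :=
  fun u => (g.toPerm (v ++ u)).drop v.length

theorem secFun_spec (g : AutT d) (v u : Vertex d) :
    g.toPerm (v ++ u) = g.toPerm v ++ secFun g v u :=
  apply_append g v u

theorem secFun_left (g : AutT d) (v u : Vertex d) :
    secFun g⁻¹ (g.toPerm v) (secFun g v u) = u := by
  have h1 := secFun_spec g⁻¹ (g.toPerm v) (secFun g v u)
  rw [← secFun_spec g v u] at h1
  rw [toPerm_inv] at h1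
  simp only [Equiv.Perm.inv_def, Equiv.symm_apply_apply] at h1
  exact (List.append_cancel_left h1).symm

theorem LP_secFun (g : AutT d) (v : Vertex d) : LP d (secFun g v) := by
  constructor
  · intro w
    simp only [secFun, List.length_drop, length_apply, List.length_append]
    omega
  · intro u1 u2 h
    have h2 : g.toPerm (v ++ u1) <+: g.toPerm (v ++ u2) := by
      refine g.prefix_apply ?_
      obtain ⟨t, ht⟩ := h
      exact ⟨t, by rw [List.append_assoc, ht]⟩
    exact h2.drop v.length

/-- The section of the tree automorphism `g` at the vertex `v`: the automorphism `g|_v` with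
`g (v ++ u) = g v ++ g|_v u`. -/
def sec (g : AutT d) (v : Vertex d) : AutT d :=
  ⟨{ toFun := secFun g v
     invFun := secFun g⁻¹ (g.toPerm v)
     left_inv := secFun_left g v
     right_inv := by
       intro u
       have h := secFun_left g⁻¹ (g.toPerm v) u
       rw [inv_inv] at h
       rw [toPerm_inv] at h
       simp only [Equiv.Perm.inv_def, Equiv.symm_apply_apply] at h
       exact h },
   by
     refine ⟨LP_secFun g v, ?_⟩
     have : ⇑(({ toFun := secFun g v
                 invFun := secFun g⁻¹ (g.toPerm v)
                 left_inv := secFun_left g v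
                 right_inv := by
                   intro u
                   have h := secFun_left g⁻¹ (g.toPerm v) u
                   rw [inv_inv] at h
                   rw [toPerm_inv] at h
                   simp only [Equiv.Perm.inv_def, Equiv.symm_apply_apply] at h
                   exact h } : Equiv.Perm (Vertex d))⁻¹) = secFun g⁻¹ (g.toPerm v) := rfl
     rw [this]
     exact LP_secFun g⁻¹ (g.toPerm v)⟩

theorem sec_apply (g : AutT d) (v u : Vertex d) :
    (sec g v).toPerm u = (g.toPerm (v ++ u)).drop v.length := rfl

end AutT

open AutT

/-- The stabilizer of the vertex `v` in `Aut T_d`. -/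
def stabT (d : ℕ) (v : Vertex d) : Subgroup (AutT d) where
  carrier := {g | g.toPerm v = v}
  one_mem' := rfl
  mul_mem' := by
    intro a b ha hb
    show (a * b).toPerm v = v
    rw [toPerm_mul, Equiv.Perm.mul_apply]
    rw [show b.toPerm v = v from hb, show a.toPerm v = v from ha]
  inv_mem' := by
    intro a ha
    show (a⁻¹).toPerm v = v
    rw [toPerm_inv]
    rw [Equiv.Perm.inv_eq_iff_eq]
    exact (show a.toPerm v = v from ha).symm

/-- The self-similarity homomorphism `π_v` from the stabilizer of `v` to `Aut T_d`,
`g ↦ g|_v`. -/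
def secHom (d : ℕ) (v : Vertex d) : (stabT d v) →* AutT d where
  toFun g := sec g.1 v
  map_one' := by
    apply Subtype.ext
    apply Equiv.ext
    intro u
    show ((1 : AutT d).toPerm (v ++ u)).drop v.length = (1 : AutT d).toPerm u
    rw [toPerm_one]
    simp [List.drop_left]
  map_mul' := by
    intro a b
    apply Subtype.ext
    apply Equiv.ext
    intro u
    have hb : (b.1).toPerm v = v := b.2
    show ((a.1 * b.1).toPerm (v ++ u)).drop v.length
        = (sec a.1 v).toPerm ((sec b.1 v).toPerm u)
    rw [toPerm_mul, Equiv.Perm.mul_apply]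
    congr 1
    congr 1
    have h := secFun_spec b.1 v u
    rw [hb] at h
    exact h

/-- The image subgroup `H^v = π_v(H_v)` of the stabilizer of `v` in `H` under the
self-similarity map. -/
def secSG (d : ℕ) (H : Subgroup (AutT d)) (v : Vertex d) : Subgroup (AutT d) :=
  (H.subgroupOf (stabT d v)).map (secHom d v)

/-- A subgroup of `Aut T_d` is self-similar if `H^v ≤ H` for every vertex `v`. -/
def IsSelfSimilar (d : ℕ) (H : Subgroup (AutT d)) : Prop :=
  ∀ v : Vertex d, secSG d H v ≤ H

/-- A subgroup of `Aut T_d` is fractal if `H^v = H` for every vertex `v`. -/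
def IsFractal (d : ℕ) (H : Subgroup (AutT d)) : Prop :=
  ∀ v : Vertex d, secSG d H v = H

end TreeDyn
namespace TreeDyn

open AutT

variable {d : ℕ}

instance : TopologicalSpace (Vertex d) := ⊥
instance : DiscreteTopology (Vertex d) := ⟨rfl⟩

/-- The profinite topology on `Aut T_d`: the topology of pointwise convergence on vertices. -/
instance : TopologicalSpace (AutT d) :=
  TopologicalSpace.induced (fun g : AutT d => (g.toPerm : Vertex d → Vertex d)) inferInstance

theorem continuous_toFun : Continuous fun g : AutT d => (g.toPerm : Vertex d → Vertex d) :=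
  continuous_induced_dom

theorem continuous_ev (x : Vertex d) : Continuous fun g : AutT d => g.toPerm x :=
  (continuous_apply x).comp continuous_toFun

instance : IsTopologicalGroup (AutT d) where
  continuous_mul := by
    apply continuous_induced_rng.2
    show Continuous fun p : AutT d × AutT d => ((p.1 * p.2).toPerm : Vertex d → Vertex d)
    apply continuous_pi
    intro x
    rw [continuous_discrete_rng]
    intro z
    have heq : ((fun p : AutT d × AutT d => (p.1 * p.2).toPerm x)) ⁻¹' {z}
        = ⋃ y : Vertex d, ((fun p : AutT d × AutT d => p.2.toPerm x) ⁻¹' {y})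
            ∩ ((fun p : AutT d × AutT d => p.1.toPerm y) ⁻¹' {z}) := by
      ext p
      simp only [Set.mem_preimage, Set.mem_singleton_iff, Set.mem_iUnion, Set.mem_inter_iff]
      constructor
      · intro h
        exact ⟨p.2.toPerm x, rfl, by rw [toPerm_mul, Equiv.Perm.mul_apply] at h; exact h⟩
      · rintro ⟨y, h1, h2⟩
        rw [toPerm_mul, Equiv.Perm.mul_apply, h1, h2]
    rw [heq]
    apply isOpen_iUnion
    intro y
    exact ((isOpen_discrete _).preimage ((continuous_ev x).comp continuous_snd)).inter
      ((isOpen_discrete _).preimage ((continuous_ev y).comp continuous_fst))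
  continuous_inv := by
    apply continuous_induced_rng.2
    show Continuous fun g : AutT d => ((g⁻¹).toPerm : Vertex d → Vertex d)
    apply continuous_pi
    intro x
    rw [continuous_discrete_rng]
    intro z
    have heq : (fun g : AutT d => (g⁻¹).toPerm x) ⁻¹' {z}
        = (fun g : AutT d => g.toPerm z) ⁻¹' {x} := by
      ext g
      simp only [Set.mem_preimage, Set.mem_singleton_iff]
      rw [toPerm_inv]
      exact Equiv.Perm.inv_eq_iff_eq.trans eq_comm
    rw [heq]
    exact (isOpen_discrete _).preimage (continuous_ev z)

end TreeDyn
namespace TreeDyn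

open AutT

/-- `J` is the self-similar closure of `H` in `G`: the smallest closed self-similar
subgroup of `G` containing `H`. -/
def IsSelfSimilarClosure (d : ℕ) (G H J : Subgroup (AutT d)) : Prop :=
  H ≤ J ∧ J ≤ G ∧ IsClosed (J : Set (AutT d)) ∧ IsSelfSimilar d J ∧
    ∀ J' : Subgroup (AutT d), H ≤ J' → J' ≤ G → IsClosed (J' : Set (AutT d)) →
      IsSelfSimilar d J' → J ≤ J'

/-- The pointwise stabilizer in `Aut T_d` of the vertices at level `m`. -/
def levelStab (d : ℕ) (m : ℕ) : Subgroup (AutT d) where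
  carrier := {g | ∀ v : Vertex d, v.length = m → g.toPerm v = v}
  one_mem' := fun _ _ => rfl
  mul_mem' := by
    intro a b ha hb v hv
    show (a * b).toPerm v = v
    rw [toPerm_mul, Equiv.Perm.mul_apply, hb v hv, ha v hv]
  inv_mem' := by
    intro a ha v hv
    show (a⁻¹).toPerm v = v
    rw [toPerm_inv, Equiv.Perm.inv_eq_iff_eq]
    exact (ha v hv).symm

/-- A topological group is pronilpotent if its quotient by every open normal subgroup
is nilpotent. -/
def Pronilpotent (G : Type*) [Group G] [TopologicalSpace G] : Prop :=
  ∀ (N : Subgroup G) [N.Normal], IsOpen (N : Set G) → Group.IsNilpotent (G ⧸ N)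

/-- A topological group is pro-`p` if its quotient by every open normal subgroup
is a `p`-group. -/
def IsProP (p : ℕ) (G : Type*) [Group G] [TopologicalSpace G] : Prop :=
  ∀ (N : Subgroup G) [N.Normal], IsOpen (N : Set G) → IsPGroup p (G ⧸ N)

/-- A topological group is prosolvable if its quotient by every open normal subgroup
is solvable. -/
def Prosolvable (G : Type*) [Group G] [TopologicalSpace G] : Prop :=
  ∀ (N : Subgroup G) [N.Normal], IsOpen (N : Set G) → IsSolvable (G ⧸ N)

/-- The Frattini subgroup of a topological group: the intersection of its
maximal open (proper) subgroups. -/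
def frattiniOpen (G : Type*) [Group G] [TopologicalSpace G] : Subgroup G :=
  sInf {M : Subgroup G | IsOpen (M : Set G) ∧ M ≠ ⊤ ∧
    ∀ M' : Subgroup G, IsOpen (M' : Set G) → M < M' → M' = ⊤}

end TreeDyn
namespace TreeDyn

open AutT

variable {d : ℕ}

/-- The cyclic successor on `Fin d`. -/
def succFin (x : Fin d) : Fin d :=
  ⟨(x.1 + 1) % d, Nat.mod_lt _ (Nat.lt_of_le_of_lt (Nat.zero_le _) x.2)⟩

/-- The cyclic predecessor on `Fin d`. -/
def predFin (x : Fin d) : Fin d :=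
  ⟨(x.1 + (d - 1)) % d, Nat.mod_lt _ (Nat.lt_of_le_of_lt (Nat.zero_le _) x.2)⟩

theorem predFin_succFin (x : Fin d) : predFin (succFin x) = x := by
  have hd : 0 < d := Nat.lt_of_le_of_lt (Nat.zero_le _) x.2
  apply Fin.ext
  show ((x.1 + 1) % d + (d - 1)) % d = x.1
  rw [Nat.mod_add_mod, show x.1 + 1 + (d - 1) = x.1 + d by omega, Nat.add_mod_right,
    Nat.mod_eq_of_lt x.2]

theorem succFin_predFin (x : Fin d) : succFin (predFin x) = x := by
  have hd : 0 < d := Nat.lt_of_le_of_lt (Nat.zero_le _) x.2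
  apply Fin.ext
  show ((x.1 + (d - 1)) % d + 1) % d = x.1
  rw [Nat.mod_add_mod, show x.1 + (d - 1) + 1 = x.1 + d by omega, Nat.add_mod_right,
    Nat.mod_eq_of_lt x.2]

theorem succFin_val_eq_zero_iff (x : Fin d) : (succFin x).1 = 0 ↔ x.1 + 1 = d := by
  show (x.1 + 1) % d = 0 ↔ x.1 + 1 = d
  by_cases h : x.1 + 1 = d
  · simp [h, Nat.mod_self]
  · rw [Nat.mod_eq_of_lt (by omega)]
    omega

theorem predFin_val_succ_eq_iff (x : Fin d) : (predFin x).1 + 1 = d ↔ x.1 = 0 := by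
  have hd : 0 < d := Nat.lt_of_le_of_lt (Nat.zero_le _) x.2
  show (x.1 + (d - 1)) % d + 1 = d ↔ x.1 = 0
  rcases Nat.eq_zero_or_pos x.1 with h | h
  · rw [h]
    simp only [Nat.zero_add]
    rw [Nat.mod_eq_of_lt (show d - 1 < d by omega)]
    simp only [iff_true, eq_self_iff_true]
    omega
  · rw [show x.1 + (d - 1) = (x.1 - 1) + d by omega, Nat.add_mod_right,
      Nat.mod_eq_of_lt (show x.1 - 1 < d by omega)]
    omega

/-- The odometer function: adds one with carrying, on words read root-first. -/
def odF (d : ℕ) : Vertex d → Vertex d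
  | [] => []
  | x :: u => succFin x :: (if x.1 + 1 = d then odF d u else u)

/-- The inverse odometer function. -/
def odG (d : ℕ) : Vertex d → Vertex d
  | [] => []
  | x :: u => predFin x :: (if x.1 = 0 then odG d u else u)

theorem odG_odF (u : Vertex d) : odG d (odF d u) = u := by
  induction u with
  | nil => rfl
  | cons x t ih =>
    simp only [odF, odG, predFin_succFin]
    by_cases h : x.1 + 1 = d
    · rw [if_pos h, if_pos ((succFin_val_eq_zero_iff x).mpr h), ih]
    · rw [if_neg h, if_neg (fun hc => h ((succFin_val_eq_zero_iff x).mp hc))]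

theorem odF_odG (u : Vertex d) : odF d (odG d u) = u := by
  induction u with
  | nil => rfl
  | cons x t ih =>
    simp only [odF, odG, succFin_predFin]
    by_cases h : x.1 = 0
    · rw [if_pos h, if_pos ((predFin_val_succ_eq_iff x).mpr h), ih]
    · rw [if_neg h, if_neg (fun hc => h ((predFin_val_succ_eq_iff x).mp hc))]

theorem odF_append (a b : Vertex d) :
    odF d (a ++ b) = odF d a ++ (if ∀ x ∈ a, x.1 + 1 = d then odF d b else b) := by
  induction a with
  | nil => simp [odF]
  | cons x t ih =>
    by_cases h : x.1 + 1 = d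
    · by_cases h2 : ∀ y ∈ t, y.1 + 1 = d
      · have hall : ∀ y ∈ x :: t, y.1 + 1 = d := by
          intro y hy
          rcases List.mem_cons.mp hy with rfl | hy
          · exact h
          · exact h2 y hy
        simp only [List.cons_append, List.append_eq, odF, if_pos h, if_pos h2, if_pos hall, ih]
      · have hall : ¬ ∀ y ∈ x :: t, y.1 + 1 = d :=
          fun hc => h2 fun y hy => hc y (List.mem_cons_of_mem x hy)
        simp only [List.cons_append, List.append_eq, odF, if_pos h, if_neg h2, if_neg hall, ih]
    · have hall : ¬ ∀ y ∈ x :: t, y.1 + 1 = d :=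
        fun hc => h (hc x List.mem_cons_self)
      simp only [List.cons_append, List.append_eq, odF, if_neg h, if_neg hall]

theorem odG_append (a b : Vertex d) :
    odG d (a ++ b) = odG d a ++ (if ∀ x ∈ a, x.1 = 0 then odG d b else b) := by
  induction a with
  | nil => simp [odG]
  | cons x t ih =>
    by_cases h : x.1 = 0
    · by_cases h2 : ∀ y ∈ t, y.1 = 0
      · have hall : ∀ y ∈ x :: t, y.1 = 0 := by
          intro y hy
          rcases List.mem_cons.mp hy with rfl | hy
          · exact h
          · exact h2 y hy
        simp only [List.cons_append, List.append_eq, odG, if_pos h, if_pos h2, if_pos hall, ih]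
      · have hall : ¬ ∀ y ∈ x :: t, y.1 = 0 :=
          fun hc => h2 fun y hy => hc y (List.mem_cons_of_mem x hy)
        simp only [List.cons_append, List.append_eq, odG, if_pos h, if_neg h2, if_neg hall, ih]
    · have hall : ¬ ∀ y ∈ x :: t, y.1 = 0 :=
        fun hc => h (hc x List.mem_cons_self)
      simp only [List.cons_append, List.append_eq, odG, if_neg h, if_neg hall]

theorem LP_odF : LP d (odF d) := by
  constructor
  · intro w
    induction w with
    | nil => rfl
    | cons x t ih =>
      simp only [odF]
      by_cases h : x.1 + 1 = d <;> simp [h, ih]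
  · intro v w h
    obtain ⟨t, rfl⟩ := h
    rw [odF_append]
    exact ⟨_, rfl⟩

theorem LP_odG : LP d (odG d) := by
  constructor
  · intro w
    induction w with
    | nil => rfl
    | cons x t ih =>
      simp only [odG]
      by_cases h : x.1 = 0 <;> simp [h, ih]
  · intro v w h
    obtain ⟨t, rfl⟩ := h
    rw [odG_append]
    exact ⟨_, rfl⟩

/-- The standard odometer as a permutation of the vertices. -/
def odPerm (d : ℕ) : Equiv.Perm (Vertex d) where
  toFun := odF d
  invFun := odG d
  left_inv := odG_odF
  right_inv := odF_odG

/-- The standard odometer `ω ∈ Aut T_d` (adds one to a `d`-adic digit string,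
with carrying). -/
def od (d : ℕ) : AutT d :=
  ⟨odPerm d, ⟨LP_odF, LP_odG⟩⟩

/-- The standard `d`-cycle `σ = (0 1 … d-1)` on the first level. -/
def sigmaFin (d : ℕ) : Equiv.Perm (Fin d) where
  toFun := succFin
  invFun := predFin
  left_inv := predFin_succFin
  right_inv := succFin_predFin

end TreeDyn

namespace TreeDyn

open AutT
variable {d : ℕ}

open AutT

lemma isOpen_levelStab (d m : ℕ) : IsOpen ((levelStab d m : Set (AutT d))) := by
  have h : (levelStab d m : Set (AutT d)) =
      ⋂ v ∈ {v : Vertex d | v.length = m}, (fun g : AutT d => g.toPerm v) ⁻¹' {v} := by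
    ext g
    simp only [Set.mem_iInter, Set.mem_preimage, Set.mem_singleton_iff, Set.mem_setOf_eq,
      SetLike.mem_coe]
    exact ⟨fun hg v hv => hg v hv, fun hg v hv => hg v hv⟩
  rw [h]
  exact (List.finite_length_eq (Fin d) m).isOpen_biInter fun v _ =>
    (isOpen_discrete _).preimage (continuous_ev v)

lemma fix_of_level (hd : 0 < d) {g : AutT d} {m : ℕ} (hg : g ∈ levelStab d m)
    {w : Vertex d} (hw : w.length ≤ m) : g.toPerm w = w := by
  set u : Vertex d := List.replicate (m - w.length) ⟨0, hd⟩ with hu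
  have hlen : (w ++ u).length = m := by simp [hu]; omega
  have h1 : g.toPerm (w ++ u) = w ++ u := hg _ hlen
  have h2 := take_apply g w u
  rw [h1, List.take_left] at h2
  exact h2.symm

lemma conj_mem_levelStab {m : ℕ} (a : AutT d) {k : AutT d} (hk : k ∈ levelStab d m) :
    a⁻¹ * k * a ∈ levelStab d m := by
  intro v hv
  show (a⁻¹ * k * a).toPerm v = v
  rw [toPerm_mul, toPerm_mul, toPerm_inv]
  simp only [Equiv.Perm.mul_apply]
  have hlen : (a.toPerm v).length = m := by rw [length_apply]; exact hv
  rw [hk _ hlen]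
  simp

lemma mem_conj_smul {x a : AutT d} {H : Subgroup (AutT d)} :
    x ∈ MulAut.conj a • H ↔ a⁻¹ * x * a ∈ H := by
  rw [Subgroup.mem_pointwise_smul_iff_inv_smul_mem, ← map_inv, MulAut.smul_def,
    MulAut.conj_apply]
  group

/-- **The normal core of an open self-similar subgroup is open, normal and self-similar.**
Let `d ≥ 2`, let `G` be a closed fractal subgroup of `Aut T_d`, and let `H` be an open
self-similar subgroup of `G`.  Then the normal core `N = ⋂_{a ∈ G} a H a⁻¹` of `H` in `G`
is an open, normal, self-similar subgroup of `G`. -/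
theorem normalCore_open_normal_selfSimilar (d : ℕ) (hd : 2 ≤ d)
    (G : Subgroup (AutT d)) (hGclosed : IsClosed (G : Set (AutT d)))
    (hGfractal : IsFractal d G)
    (H : Subgroup (AutT d)) (hHG : H ≤ G)
    (hHopen : IsOpen ((H.subgroupOf G) : Set G))
    (hHss : IsSelfSimilar d H)
    (N : Subgroup (AutT d)) (hN : N = ⨅ a ∈ G, MulAut.conj a • H) :
    N ≤ G ∧ IsOpen ((N.subgroupOf G) : Set G) ∧ (N.subgroupOf G).Normal ∧
      IsSelfSimilar d N := by
  have hdpos : 0 < d := by omega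
  have memN : ∀ x : AutT d, x ∈ N ↔ ∀ a ∈ G, a⁻¹ * x * a ∈ H := by
    intro x
    rw [hN]
    simp only [Subgroup.mem_iInf, mem_conj_smul]
  have hNH : N ≤ H := by
    intro n hn
    have := (memN n).mp hn 1 G.one_mem
    simpa using this
  have hNG : N ≤ G := hNH.trans hHG
  have hconjN : ∀ b ∈ G, ∀ n ∈ N, b⁻¹ * n * b ∈ N := by
    intro b hb n hn
    rw [memN]
    intro a ha
    have h1 := (memN n).mp hn (b * a) (G.mul_mem hb ha)
    have : a⁻¹ * (b⁻¹ * n * b) * a = (b * a)⁻¹ * n * (b * a) := by group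
    rw [this]
    exact h1
  -- extract a level m with G ⊓ levelStab d m ≤ H
  obtain ⟨t, htOpen, htEq⟩ := isOpen_induced_iff.mp hHopen
  obtain ⟨s, hsOpen, hsEq⟩ := isOpen_induced_iff.mp htOpen
  have h1t : (1 : AutT d) ∈ t := by
    have : (⟨1, G.one_mem⟩ : G) ∈ (H.subgroupOf G : Set G) := H.subgroupOf G |>.one_mem
    rw [← htEq] at this
    exact this
  have h1s : ((1 : AutT d).toPerm : Vertex d → Vertex d) ∈ s := by
    rw [← hsEq] at h1t; exact h1t
  obtain ⟨I, u, hu, hIs⟩ := isOpen_pi_iff.mp hsOpen _ h1s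
  set m : ℕ := I.sup List.length with hm
  have hKH : ∀ k : AutT d, k ∈ G → k ∈ levelStab d m → k ∈ H := by
    intro k hkG hkL
    have hks : (k.toPerm : Vertex d → Vertex d) ∈ s := by
      apply hIs
      intro i hi
      have hlen : i.length ≤ m := Finset.le_sup hi
      have : k.toPerm i = i := fix_of_level hdpos hkL hlen
      rw [this]
      have := (hu i hi).2
      simpa [toPerm_one] using this
    have hkt : k ∈ t := by rw [← hsEq]; exact hks
    have : (⟨k, hkG⟩ : G) ∈ (H.subgroupOf G : Set G) := by rw [← htEq]; exact hkt
    exact this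
  have hKN : ∀ k : AutT d, k ∈ G → k ∈ levelStab d m → k ∈ N := by
    intro k hkG hkL
    rw [memN]
    intro a ha
    exact hKH _ (G.mul_mem (G.mul_mem (G.inv_mem ha) hkG) ha)
      (conj_mem_levelStab a hkL)
  refine ⟨hNG, ?_, ?_, ?_⟩
  · -- openness
    have hsub : ((levelStab d m).subgroupOf G) ≤ N.subgroupOf G := by
      intro g hg
      exact Subgroup.mem_subgroupOf.mpr (hKN g.1 g.2 (Subgroup.mem_subgroupOf.mp hg))
    refine Subgroup.isOpen_mono hsub ?_
    have : (((levelStab d m).subgroupOf G) : Set G) =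
        (Subtype.val : G → AutT d) ⁻¹' (levelStab d m : Set (AutT d)) := rfl
    rw [this]
    exact (isOpen_levelStab d m).preimage continuous_subtype_val
  · -- normality
    constructor
    intro n hn g
    refine Subgroup.mem_subgroupOf.mpr ?_
    have hn' : (n : AutT d) ∈ N := Subgroup.mem_subgroupOf.mp hn
    have := hconjN (g : AutT d)⁻¹ (G.inv_mem g.2) n hn'
    simpa using this
  · -- self-similarity
    intro v x hx
    obtain ⟨g, hgN, rfl⟩ := hx
    have hgN' : (g : AutT d) ∈ N := Subgroup.mem_subgroupOf.mp hgN
    rw [memN]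
    intro a ha
    have haG : a ∈ secSG d G v := (hGfractal v).symm ▸ ha
    obtain ⟨b, hbG, hba⟩ := haG
    have hbG' : (b : AutT d) ∈ G := Subgroup.mem_subgroupOf.mp hbG
    set c : stabT d v := b⁻¹ * g * b with hc
    have hcH : (c : AutT d) ∈ H := by
      refine hNH ?_
      exact hconjN (b : AutT d) hbG' (g : AutT d) hgN'
    have hsecc : secHom d v c ∈ H := by
      apply hHss v
      exact ⟨c, Subgroup.mem_subgroupOf.mpr hcH, rfl⟩
    have heq : secHom d v c = a⁻¹ * secHom d v g * a := by
      rw [hc, map_mul, map_mul, map_inv, hba]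
    rw [← heq]
    exact hsecc


end TreeDyn
end

section
/- Let d ≥ 2, let G be a closed self-similar subgroup of Aut T_d, and let P be a collection of closed subgroups of G such that: (1) for every H ∈ P and every vertex v, the smallest closed subgroup of G containing H ∪ H^v belongs to P; and (2) for every family (H_i)_{i ∈ I} of members of P totally ordered by inclusion, the topological closure of ⋃_{i ∈ I} H_i belongs to P. Then P is closed under self-similar closure: for every H ∈ P, the self-similar closure of H in G belongs to P. -/
open scoped Pointwise

namespace TreeDyn


theorem secSG_mono {d : ℕ} {K J : Subgroup (AutT d)} (h : K ≤ J) (v : Vertex d) :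
    secSG d K v ≤ secSG d J v :=
  Subgroup.map_mono (Subgroup.comap_mono h)

/-- **Construction criterion for self-similar properties.**
Let `d ≥ 2`, let `G` be a closed self-similar subgroup of `Aut T_d`, and let `P` be a
collection of closed subgroups of `G` such that (1) for every `H ∈ P` and every vertex
`v`, the smallest closed subgroup of `G` containing `H ∪ H^v` belongs to `P`, and
(2) for every family of members of `P` totally ordered by inclusion, the topological
closure of its union belongs to `P`.  Then `P` is closed under self-similar closure. -/
theorem selfSimilar_construction_criterion (d : ℕ) (hd : 2 ≤ d)
    (G : Subgroup (AutT d)) (hGclosed : IsClosed (G : Set (AutT d)))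
    (hGss : IsSelfSimilar d G)
    (P : Set (Subgroup (AutT d)))
    (hP : ∀ H ∈ P, H ≤ G ∧ IsClosed (H : Set (AutT d)))
    (h1 : ∀ H ∈ P, ∀ v : Vertex d, (H ⊔ secSG d H v).topologicalClosure ∈ P)
    (h2 : ∀ (I : Type) [Nonempty I] (Hs : I → Subgroup (AutT d)), (∀ i, Hs i ∈ P) →
      (∀ i j, Hs i ≤ Hs j ∨ Hs j ≤ Hs i) → (⨆ i, Hs i).topologicalClosure ∈ P) :
    ∀ H ∈ P, ∀ J : Subgroup (AutT d), IsSelfSimilarClosure d G H J → J ∈ P := by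
  intro H hH J hJ
  obtain ⟨hHJ, hJG, hJcl, hJss, hJmin⟩ := hJ
  -- Zorn on S = {K ∈ P | H ≤ K ∧ K ≤ J}
  set S : Set (Subgroup (AutT d)) := {K | K ∈ P ∧ H ≤ K ∧ K ≤ J} with hS
  have hchain : ∀ c ⊆ S, IsChain (· ≤ ·) c → ∀ y ∈ c, ∃ ub ∈ S, ∀ z ∈ c, z ≤ ub := by
    intro c hcS hc y hy
    haveI : Nonempty c := ⟨⟨y, hy⟩⟩
    have key := h2 c (fun i => (i : Subgroup (AutT d))) (fun i => (hcS i.2).1)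
      (fun i j => (hc.total i.2 j.2).imp id id)
    refine ⟨(⨆ i : c, (i : Subgroup (AutT d))).topologicalClosure, ⟨key, ?_, ?_⟩, ?_⟩
    · exact le_trans (hcS hy).2.1 (le_trans (le_iSup (fun i : c => (i : Subgroup (AutT d))) ⟨y, hy⟩)
        (Subgroup.le_topologicalClosure _))
    · exact Subgroup.topologicalClosure_minimal _ (iSup_le fun i => (hcS i.2).2.2) hJcl
    · intro z hz
      exact le_trans (le_iSup (fun i : c => (i : Subgroup (AutT d))) ⟨z, hz⟩)
        (Subgroup.le_topologicalClosure _)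
  obtain ⟨K, hHK, hKS, hKmax⟩ := zorn_le_nonempty₀ S hchain H ⟨hH, le_rfl, hHJ⟩
  obtain ⟨hKP, hHK', hKJ⟩ := hKS
  -- K is self-similar
  have hKss : IsSelfSimilar d K := by
    intro v
    have hK' : (K ⊔ secSG d K v).topologicalClosure ∈ P := h1 K hKP v
    have hle : K ⊔ secSG d K v ≤ J :=
      sup_le hKJ (le_trans (secSG_mono hKJ v) (hJss v))
    have hclJ : (K ⊔ secSG d K v).topologicalClosure ≤ J :=
      Subgroup.topologicalClosure_minimal _ hle hJcl
    have hKle : K ≤ (K ⊔ secSG d K v).topologicalClosure :=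
      le_trans le_sup_left (Subgroup.le_topologicalClosure _)
    have heq : (K ⊔ secSG d K v).topologicalClosure = K := by
      have := hKmax ⟨hK', le_trans hHK' hKle, hclJ⟩ hKle
      exact le_antisymm this hKle
    calc secSG d K v ≤ K ⊔ secSG d K v := le_sup_right
      _ ≤ (K ⊔ secSG d K v).topologicalClosure := (Subgroup.le_topologicalClosure _)
      _ = K := heq
  have hJK : J ≤ K := hJmin K hHK' (le_trans hKJ hJG) (hP K hKP).2 hKss
  have : J = K := le_antisymm hJK hKJ
  rw [this]
  exact hKP


end TreeDyn
end
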